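/- There exist an open connected set U ⊆ ℂ containing the real interval [0,1) with P(U) ⊆ U, and a holomorphic function Φ : U → ℂ, such that the functions z ↦ 4^N · P^{∘N}(z) converge to Φ uniformly on compact subsets of U as N → ∞, and Φ satisfies Φ(0) = 0, Φ'(0) = 1, and the Schröder-type functional equation Φ(P(z)) = Φ(z)/4 for all z ∈ U. -/

import Mathlib

open Filter

/-- The cubic polynomial `P(z) = (z + 2z² + z³)/4`. -/
noncomputable def P : ℂ → ℂ := fun z => (z + 2 * z ^ 2 + z ^ 3) / 4

lemma P_eq (z : ℂ) : P z = z * (1 + z) ^ 2 / 4 := by unfold P; ring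
lemma P_zero : P 0 = 0 := by simp [P]
lemma iterP_zero (N : ℕ) : P^[N] 0 = 0 := Function.iterate_fixed P_zero N

noncomputable def phi : ℕ → ℂ → ℂ := fun N z => (4 : ℂ) ^ N * P^[N] z

lemma phi_succ (N : ℕ) (z : ℂ) : phi (N + 1) z = phi N z * (1 + P^[N] z) ^ 2 := by
  unfold phi
  rw [Function.iterate_succ_apply', P_eq]
  ring

lemma norm_P_le {r : ℝ} {z : ℂ} (hz : ‖z‖ ≤ r) : ‖P z‖ ≤ ((1 + r) / 2) ^ 2 * ‖z‖ := by
  have h1 : ‖(1 : ℂ) + z‖ ≤ 1 + r := (norm_add_le 1 z).trans (by rw [norm_one]; linarith)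
  have h2 : ‖(1:ℂ) + z‖ ^ 2 ≤ (1 + r) ^ 2 := by
    apply pow_le_pow_left₀ (norm_nonneg _) h1
  rw [P_eq]
  have h3 : ‖z * (1 + z) ^ 2 / 4‖ = ‖z‖ * ‖(1:ℂ) + z‖ ^ 2 / 4 := by
    simp [norm_div, norm_mul, norm_pow]
  rw [h3]
  nlinarith [mul_le_mul_of_nonneg_left h2 (norm_nonneg z), norm_nonneg z]

lemma norm_iterP_le {r : ℝ} (hr1 : r < 1) {z : ℂ} (hz : ‖z‖ ≤ r) (N : ℕ) :
    ‖P^[N] z‖ ≤ (((1 + r) / 2) ^ 2) ^ N * ‖z‖ := by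
  have hr0 : 0 ≤ r := (norm_nonneg z).trans hz
  set c : ℝ := ((1 + r) / 2) ^ 2 with hc
  have hc0 : 0 ≤ c := by positivity
  have hc1 : c < 1 := by rw [hc]; nlinarith
  induction N with
  | zero => simp
  | succ N ih =>
    rw [Function.iterate_succ_apply']
    have hw : ‖P^[N] z‖ ≤ r := by
      calc ‖P^[N] z‖ ≤ c ^ N * ‖z‖ := ih
        _ ≤ 1 * r := by
            apply mul_le_mul (pow_le_one₀ hc0 hc1.le) hz (norm_nonneg z) zero_le_one
        _ = r := one_mul r
    calc ‖P (P^[N] z)‖ ≤ c * ‖P^[N] z‖ := norm_P_le hw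
      _ ≤ c * (c ^ N * ‖z‖) := by
          exact mul_le_mul_of_nonneg_left ih hc0
      _ = c ^ (N + 1) * ‖z‖ := by ring

lemma my_geom_sum_le {c : ℝ} (hc0 : 0 ≤ c) (hc1 : c < 1) (N : ℕ) :
    ∑ k ∈ Finset.range N, c ^ k ≤ 1 / (1 - c) := by
  rw [geom_sum_eq hc1.ne N]
  have h1 : 0 < 1 - c := by linarith
  have h2 : (c ^ N - 1) / (c - 1) = (1 - c ^ N) / (1 - c) := by
    rw [← neg_div_neg_eq]; ring_nf
  rw [h2, div_le_div_iff₀ h1 h1]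
  have : 0 ≤ c ^ N := pow_nonneg hc0 N
  nlinarith

lemma norm_phi_le {r : ℝ} (hr1 : r < 1) {z : ℂ} (hz : ‖z‖ ≤ r) (N : ℕ) :
    ‖phi N z‖ ≤ r * Real.exp (3 * r / (1 - ((1 + r) / 2) ^ 2)) := by
  have hr0 : 0 ≤ r := (norm_nonneg z).trans hz
  set c : ℝ := ((1 + r) / 2) ^ 2 with hc
  have hc0 : 0 ≤ c := by positivity
  have hc1 : c < 1 := by rw [hc]; nlinarith
  have key : ∀ N : ℕ, ‖phi N z‖ ≤ r * Real.exp (3 * r * ∑ k ∈ Finset.range N, c ^ k) := by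
    intro N
    induction N with
    | zero => simpa [phi] using hz
    | succ N ih =>
      have hw : ‖P^[N] z‖ ≤ r * c ^ N := by
        calc ‖P^[N] z‖ ≤ c ^ N * ‖z‖ := norm_iterP_le hr1 hz N
          _ ≤ c ^ N * r := mul_le_mul_of_nonneg_left hz (pow_nonneg hc0 N)
          _ = r * c ^ N := mul_comm _ _
      have h1 : ‖(1:ℂ) + P^[N] z‖ ≤ 1 + r * c ^ N :=
        (norm_add_le 1 _).trans (by rw [norm_one]; linarith)
      have h2 : ‖(1:ℂ) + P^[N] z‖ ^ 2 ≤ (1 + r * c ^ N) ^ 2 :=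
        pow_le_pow_left₀ (norm_nonneg _) h1 2
      have hx0 : 0 ≤ r * c ^ N := by positivity
      have h3 : (1 + r * c ^ N) ^ 2 ≤ Real.exp (3 * r * c ^ N) := by
        have e1 : 1 + r * c ^ N ≤ Real.exp (r * c ^ N) := by
          have := Real.add_one_le_exp (r * c ^ N); linarith
        calc (1 + r * c ^ N) ^ 2 ≤ Real.exp (r * c ^ N) ^ 2 :=
              pow_le_pow_left₀ (by linarith) e1 2
          _ = Real.exp (2 * (r * c ^ N)) := by
              rw [← Real.exp_nat_mul]; norm_num
          _ ≤ Real.exp (3 * r * c ^ N) := by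
              apply Real.exp_le_exp.mpr; nlinarith
      calc ‖phi (N + 1) z‖ = ‖phi N z‖ * ‖(1:ℂ) + P^[N] z‖ ^ 2 := by
            rw [phi_succ, norm_mul, norm_pow]
        _ ≤ (r * Real.exp (3 * r * ∑ k ∈ Finset.range N, c ^ k)) * Real.exp (3 * r * c ^ N) := by
            apply mul_le_mul ih (h2.trans h3) (by positivity) (by positivity)
        _ = r * Real.exp (3 * r * ∑ k ∈ Finset.range (N + 1), c ^ k) := by
            rw [mul_assoc, ← Real.exp_add, Finset.sum_range_succ, mul_add]
  calc ‖phi N z‖ ≤ r * Real.exp (3 * r * ∑ k ∈ Finset.range N, c ^ k) := key N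
    _ ≤ r * Real.exp (3 * r / (1 - c)) := by
        apply mul_le_mul_of_nonneg_left _ hr0
        apply Real.exp_le_exp.mpr
        have := my_geom_sum_le hc0 hc1 N
        calc 3 * r * ∑ k ∈ Finset.range N, c ^ k ≤ 3 * r * (1 / (1 - c)) := by
              apply mul_le_mul_of_nonneg_left this (by positivity)
          _ = 3 * r / (1 - c) := by ring

lemma dist_phi_le {r : ℝ} (hr1 : r < 1) {z : ℂ} (hz : ‖z‖ ≤ r) (N : ℕ) :
    dist (phi N z) (phi (N + 1) z) ≤
      (3 * r * (r * Real.exp (3 * r / (1 - ((1 + r) / 2) ^ 2)))) * (((1 + r) / 2) ^ 2) ^ N := by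
  have hr0 : 0 ≤ r := (norm_nonneg z).trans hz
  set c : ℝ := ((1 + r) / 2) ^ 2 with hc
  set M : ℝ := r * Real.exp (3 * r / (1 - c)) with hM
  have hc0 : 0 ≤ c := by positivity
  have hM0 : 0 ≤ M := by positivity
  have hw : ‖P^[N] z‖ ≤ r * c ^ N := by
    calc ‖P^[N] z‖ ≤ c ^ N * ‖z‖ := norm_iterP_le hr1 hz N
      _ ≤ c ^ N * r := mul_le_mul_of_nonneg_left hz (pow_nonneg hc0 N)
      _ = r * c ^ N := mul_comm _ _
  have hwr : ‖P^[N] z‖ ≤ r := by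
    have : c ^ N ≤ 1 := pow_le_one₀ hc0 (by nlinarith)
    nlinarith [norm_nonneg (P^[N] z)]
  have heq : phi N z - phi (N + 1) z = -(phi N z * (P^[N] z * (2 + P^[N] z))) := by
    rw [phi_succ]; ring
  rw [dist_eq_norm, heq, norm_neg, norm_mul, norm_mul]
  have h2 : ‖(2:ℂ) + P^[N] z‖ ≤ 3 := by
    calc ‖(2:ℂ) + P^[N] z‖ ≤ ‖(2:ℂ)‖ + ‖P^[N] z‖ := norm_add_le _ _
      _ ≤ 2 + r := by
          have : ‖(2:ℂ)‖ = 2 := by norm_num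
          linarith
      _ ≤ 3 := by linarith
  have hphiM : ‖phi N z‖ ≤ M := norm_phi_le hr1 hz N
  calc ‖phi N z‖ * (‖P^[N] z‖ * ‖(2:ℂ) + P^[N] z‖)
      ≤ M * ((r * c ^ N) * 3) := by
        apply mul_le_mul hphiM _ (by positivity) hM0
        apply mul_le_mul hw h2 (norm_nonneg _) (by positivity)
    _ = (3 * r * M) * c ^ N := by ring

noncomputable def Phi : ℂ → ℂ := fun z => limUnder atTop (fun N => phi N z)

lemma phi_cauchy {z : ℂ} (hz : ‖z‖ < 1) : CauchySeq (fun N => phi N z) :=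
  cauchySeq_of_le_geometric _ _ (by nlinarith [norm_nonneg z] :
      ((1 + ‖z‖) / 2) ^ 2 < 1) (dist_phi_le hz le_rfl)

lemma phi_tendsto {z : ℂ} (hz : ‖z‖ < 1) :
    Tendsto (fun N => phi N z) atTop (nhds (Phi z)) :=
  (phi_cauchy hz).tendsto_limUnder

lemma dist_phi_Phi {r : ℝ} (hr1 : r < 1) {z : ℂ} (hz : ‖z‖ ≤ r) (N : ℕ) :
    dist (phi N z) (Phi z) ≤
      (3 * r * (r * Real.exp (3 * r / (1 - ((1 + r) / 2) ^ 2)))) * (((1 + r) / 2) ^ 2) ^ N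
        / (1 - ((1 + r) / 2) ^ 2) := by
  have hr0 : 0 ≤ r := (norm_nonneg z).trans hz
  have hc1 : ((1 + r) / 2) ^ 2 < 1 := by nlinarith
  exact dist_le_of_le_geometric_of_tendsto _ _ hc1 (dist_phi_le hr1 hz)
    (phi_tendsto (lt_of_le_of_lt hz hr1)) N


lemma P_diff : Differentiable ℂ P := by unfold P; fun_prop

lemma phi_diff (N : ℕ) : Differentiable ℂ (fun z => (4:ℂ) ^ N * P^[N] z) :=
  (P_diff.iterate N).const_mul _

lemma hasDerivAt_P0 : HasDerivAt P (1/4 : ℂ) 0 := by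
  have h := (((hasDerivAt_id (0:ℂ)).add (((hasDerivAt_pow 2 (0:ℂ))).const_mul 2)).add
    (hasDerivAt_pow 3 (0:ℂ))).div_const 4
  norm_num at h
  unfold P
  exact h

lemma hasDerivAt_iterP (N : ℕ) : HasDerivAt (P^[N]) ((1/4 : ℂ) ^ N) 0 := by
  induction N with
  | zero => simpa using hasDerivAt_id (0:ℂ)
  | succ N ih =>
    have hP : HasDerivAt P (1/4 : ℂ) (P^[N] 0) := by rw [iterP_zero]; exact hasDerivAt_P0
    have := HasDerivAt.comp 0 hP ih
    rw [← Function.iterate_succ'] at this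
    rw [pow_succ']; exact this

lemma deriv_phi_zero (N : ℕ) : deriv (fun z => (4:ℂ) ^ N * P^[N] z) 0 = 1 := by
  have h : HasDerivAt (fun z => (4:ℂ) ^ N * P^[N] z) ((4:ℂ)^N * (1/4:ℂ)^N) 0 :=
    (hasDerivAt_iterP N).const_mul _
  rw [h.deriv, ← mul_pow]
  norm_num

lemma phi_tlu : TendstoLocallyUniformlyOn (fun (N : ℕ) (z : ℂ) => (4 : ℂ) ^ N * P^[N] z)
    Phi atTop (Metric.ball (0:ℂ) 1) := by
  rw [tendstoLocallyUniformlyOn_iff_forall_isCompact Metric.isOpen_ball]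
  intro K hKU hK
  rcases K.eq_empty_or_nonempty with rfl | hne
  · intro u _; simp
  obtain ⟨x, hxK, hmax⟩ := hK.exists_isMaxOn hne continuous_norm.continuousOn
  set r : ℝ := ‖x‖ with hr
  have hr1 : r < 1 := mem_ball_zero_iff.mp (hKU hxK)
  have hr0 : 0 ≤ r := norm_nonneg x
  set c : ℝ := ((1 + r) / 2) ^ 2 with hc
  set C : ℝ := 3 * r * (r * Real.exp (3 * r / (1 - c))) with hC
  have hc0 : 0 ≤ c := by positivity
  have hc1 : c < 1 := by rw [hc]; nlinarith
  rw [Metric.tendstoUniformlyOn_iff]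
  intro ε hε
  have hten : Tendsto (fun N : ℕ => C * c ^ N / (1 - c)) atTop (nhds 0) := by
    have := ((tendsto_pow_atTop_nhds_zero_of_lt_one hc0 hc1).const_mul C).div_const (1 - c)
    simpa using this
  filter_upwards [hten.eventually (gt_mem_nhds hε)] with N hN z hzK
  have hz : ‖z‖ ≤ r := hmax hzK
  calc dist (Phi z) ((4:ℂ) ^ N * P^[N] z) = dist (phi N z) (Phi z) := dist_comm _ _
    _ ≤ C * c ^ N / (1 - c) := dist_phi_Phi hr1 hz N
    _ < ε := hN

/-- there exist an open connected set `U ⊇ [0,1)` with `P(U) ⊆ U` and a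
holomorphic function `Φ` on `U` such that `4^N P^{∘N} → Φ` locally uniformly on `U`,
`Φ(0) = 0`, `Φ'(0) = 1`, and `Φ(P(z)) = Φ(z)/4` on `U` (the Koenigs linearizer of `P` at 0). -/
theorem stmt2 : ∃ (U : Set ℂ) (Φ : ℂ → ℂ),
    IsOpen U ∧ IsConnected U ∧
    (∀ x : ℝ, x ∈ Set.Ico (0 : ℝ) 1 → (x : ℂ) ∈ U) ∧
    Set.MapsTo P U U ∧
    DifferentiableOn ℂ Φ U ∧
    TendstoLocallyUniformlyOn (fun (N : ℕ) (z : ℂ) => (4 : ℂ) ^ N * P^[N] z) Φ atTop U ∧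
    Φ 0 = 0 ∧ deriv Φ 0 = 1 ∧
    ∀ z ∈ U, Φ (P z) = Φ z / 4 := by
  refine ⟨Metric.ball 0 1, Phi, Metric.isOpen_ball,
    (convex_ball (0:ℂ) 1).isConnected ⟨0, by simp⟩, ?_, ?_, ?_, ?_, ?_, ?_, ?_⟩
  · -- Ico
    intro x hx
    rw [mem_ball_zero_iff]
    simpa [Complex.norm_real, abs_of_nonneg hx.1] using hx.2
  · -- MapsTo
    intro z hz
    rw [mem_ball_zero_iff] at hz ⊢
    have h := norm_P_le (le_refl ‖z‖)
    nlinarith [norm_nonneg z]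
  · -- DifferentiableOn
    exact phi_tlu.differentiableOn
      (Eventually.of_forall fun N => (phi_diff N).differentiableOn) Metric.isOpen_ball
  · -- TendstoLocallyUniformlyOn
    exact phi_tlu
  · -- Phi 0 = 0
    have h0 : (0:ℂ) ∈ Metric.ball (0:ℂ) 1 := by simp
    have h1 : Tendsto (fun N => phi N 0) atTop (nhds (Phi 0)) :=
      phi_tendsto (by simp)
    have h2 : (fun N => phi N (0:ℂ)) = fun _ => (0:ℂ) := by
      funext N; simp [phi, iterP_zero]
    rw [h2] at h1
    exact (tendsto_nhds_unique h1 tendsto_const_nhds)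
  · -- deriv
    have hd := phi_tlu.deriv
      (Eventually.of_forall fun N => (phi_diff N).differentiableOn) Metric.isOpen_ball
    have h0 := hd.tendsto_at (show (0:ℂ) ∈ Metric.ball (0:ℂ) 1 by simp)
    have heq : (fun N => (deriv ∘ fun (N : ℕ) (z : ℂ) => (4 : ℂ) ^ N * P^[N] z) N 0)
        = fun _ : ℕ => (1:ℂ) := by
      funext N; exact deriv_phi_zero N
    rw [heq] at h0
    exact tendsto_nhds_unique h0 tendsto_const_nhds
  · -- functional equation
    intro z hz
    rw [mem_ball_zero_iff] at hz
    have hPz : ‖P z‖ < 1 := by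
      have h := norm_P_le (le_refl ‖z‖)
      nlinarith [norm_nonneg z]
    have h1 : Tendsto (fun N => phi N (P z)) atTop (nhds (Phi (P z))) := phi_tendsto hPz
    have h2 : Tendsto (fun N => phi (N + 1) z) atTop (nhds (Phi z)) :=
      (phi_tendsto hz).comp (tendsto_add_atTop_nat 1)
    have heq : (fun N => phi N (P z)) = fun N => phi (N + 1) z / 4 := by
      funext N
      simp only [phi, Function.iterate_succ_apply, pow_succ]
      ring
    rw [heq] at h1
    have h3 : Tendsto (fun N => phi (N + 1) z / 4) atTop (nhds (Phi z / 4)) :=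
      h2.div_const 4
    exact tendsto_nhds_unique h1 h3
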